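/- arXiv:1904.11668 — 3 statements merged into one kernel-verified Lean document; each statement's English description precedes it below -/
import Mathlib

section
/- Let (M, 𝒜) be an uncertainty matroid on a finite ground set E and suppose the collection 𝔅 of uniformly optimal bases of (M, 𝒜) is nonempty. Then 𝔅 is the collection of bases of a matroid on ground set E. -/
open Matroid

variable {α : Type*}

/-- `A` is an uncertainty area function for `M`: each element of the ground set gets a
nonempty bounded set of reals. -/
def IsAreaFun (M : Matroid α) (A : α → Set ℝ) : Prop :=
  ∀ e ∈ M.E, (A e).Nonempty ∧ BddBelow (A e) ∧ BddAbove (A e)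

/-- A realization: a weight function with `w e ∈ A e` for every element of the ground set. -/
def Realization (M : Matroid α) (A : α → Set ℝ) (w : α → ℝ) : Prop :=
  ∀ e ∈ M.E, w e ∈ A e

/-- The total `w`-weight of a set. -/
noncomputable def setWeight (w : α → ℝ) (T : Set α) : ℝ := ∑ᶠ e ∈ T, w e

/-- A `w`-basis: a basis of `M` of minimum total `w`-weight. -/
def IsMinBasis (M : Matroid α) (w : α → ℝ) (T : Set α) : Prop :=
  M.IsBase T ∧ ∀ B, M.IsBase B → setWeight w T ≤ setWeight w B

/-- A uniformly optimal basis (an `A`-basis): a `w`-basis for every realization `w`. -/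
def IsUOB (M : Matroid α) (A : α → Set ℝ) (T : Set α) : Prop :=
  ∀ w, Realization M A w → IsMinBasis M w T

/-- An element is certain if its area is a singleton. -/
def Certain (A : α → Set ℝ) (e : α) : Prop := ∃ r : ℝ, A e = {r}

/-- `e` is blue if every realization admits a minimum weight basis containing `e`. -/
def Blue (M : Matroid α) (A : α → Set ℝ) (e : α) : Prop :=
  ∀ w, Realization M A w → ∃ T, IsMinBasis M w T ∧ e ∈ T

/-- `e` is red if every realization admits a minimum weight basis avoiding `e`. -/
def Red (M : Matroid α) (A : α → Set ℝ) (e : α) : Prop :=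
  ∀ w, Realization M A w → ∃ T, IsMinBasis M w T ∧ e ∉ T

/-- `e` is colored if it is blue or red. -/
def Colored (M : Matroid α) (A : α → Set ℝ) (e : α) : Prop :=
  Blue M A e ∨ Red M A e

open Set
lemma setWeight_exchange (w : α → ℝ) {T : Set α} (hT : T.Finite) {e f : α}
    (he : e ∈ T) (hf : f ∉ T) :
    setWeight w (insert f (T \ {e})) = setWeight w T - w e + w f := by
  have h1 : setWeight w (insert f (T \ {e})) = w f + setWeight w (T \ {e}) :=
    finsum_mem_insert w (fun h => hf h.1) hT.diff
  have h2 : setWeight w T = w e + setWeight w (T \ {e}) := by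
    nth_rewrite 1 [show T = insert e (T \ {e}) by simp [he]]
    exact finsum_mem_insert w (fun h => h.2 rfl) hT.diff
  rw [h1, h2]; ring

lemma sym_exchange (M : Matroid α) (hE : M.E.Finite) {B₁ B₂ : Set α}
    (h₁ : M.IsBase B₁) (h₂ : M.IsBase B₂) {e : α} (he : e ∈ B₁ \ B₂) :
    ∃ f ∈ B₂ \ B₁, M.IsBase (insert f (B₁ \ {e})) ∧ M.IsBase (insert e (B₂ \ {f})) := by
  have heE : e ∈ M.E := h₁.subset_ground he.1
  have heB₂ : e ∈ M.closure B₂ := by rw [h₂.closure_eq]; exact heE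
  set S : Set (Set α) := {J | J ⊆ B₂ ∧ e ∈ M.closure J} with hS
  have hSfin : S.Finite :=
    ((hE.subset h₂.subset_ground).finite_subsets).subset (fun J hJ => hJ.1)
  obtain ⟨C, hCS, hCmin⟩ := Set.exists_min_image S ncard hSfin ⟨B₂, Subset.rfl, heB₂⟩
  have hCfin : C.Finite := hE.subset (hCS.1.trans h₂.subset_ground)
  -- minimality
  have hmin : ∀ f ∈ C, e ∉ M.closure (C \ {f}) := by
    intro f hfC hcon
    have : C.ncard ≤ (C \ {f}).ncard := hCmin _ ⟨(diff_subset).trans hCS.1, hcon⟩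
    have : (C \ {f}).ncard < C.ncard := ncard_diff_singleton_lt_of_mem hfC hCfin
    omega
  -- e not in closure of B₁ \ {e}
  have heB₁ : e ∉ M.closure (B₁ \ {e}) := by
    intro hcon
    have hind : M.Indep (insert e (B₁ \ {e})) := by
      rw [show insert e (B₁ \ {e}) = B₁ by simp [he.1]]; exact h₁.indep
    rw [(h₁.indep.diff {e}).insert_indep_iff_of_notMem (fun h => h.2 rfl)] at hind
    exact hind.2 hcon
  -- find f ∈ C outside closure of B₁ \ {e}
  have : ∃ f ∈ C, f ∉ M.closure (B₁ \ {e}) := by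
    by_contra hcon
    push_neg at hcon
    have : M.closure C ⊆ M.closure (B₁ \ {e}) :=
      closure_subset_closure_of_subset_closure hcon
    exact heB₁ (this hCS.2)
  obtain ⟨f, hfC, hf⟩ := this
  have hfB₂ : f ∈ B₂ := hCS.1 hfC
  have hfE : f ∈ M.E := h₂.subset_ground hfB₂
  have hfB₁ : f ∉ B₁ := by
    intro hcon
    have hfne : f ≠ e := by rintro rfl; exact he.2 hfB₂
    exact hf (M.subset_closure _ (diff_subset.trans h₁.subset_ground) ⟨hcon, hfne⟩)
  refine ⟨f, ⟨hfB₂, hfB₁⟩, ?_, ?_⟩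
  · -- insert f (B₁ \ {e}) is a base
    have hind : M.Indep (insert f (B₁ \ {e})) := by
      rw [(h₁.indep.diff {e}).insert_indep_iff_of_notMem (fun h => hfB₁ h.1)]
      exact ⟨hfE, hf⟩
    exact h₁.exchange_isBase_of_indep hfB₁ hind
  · -- insert e (B₂ \ {f}) is a base
    have hfclB₂ : f ∉ M.closure (B₂ \ {f}) := by
      intro hcon
      have hind : M.Indep (insert f (B₂ \ {f})) := by
        rw [show insert f (B₂ \ {f}) = B₂ by simp [hfB₂]]; exact h₂.indep
      rw [(h₂.indep.diff {f}).insert_indep_iff_of_notMem (fun h => h.2 rfl)] at hind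
      exact hind.2 hcon
    have heclB₂ : e ∉ M.closure (B₂ \ {f}) := by
      intro hcon
      have heC' : e ∈ M.closure (insert f (C \ {f})) := by
        rw [show insert f (C \ {f}) = C by simp [hfC]]; exact hCS.2
      have hfcl : f ∈ M.closure (insert e (C \ {f})) :=
        mem_closure_insert (hmin f hfC) heC'
      have hsub : insert e (C \ {f}) ⊆ insert e (B₂ \ {f}) :=
        insert_subset_insert (diff_subset_diff_left hCS.1)
      have : f ∈ M.closure (insert e (B₂ \ {f})) :=
        M.closure_subset_closure hsub hfcl
      rw [closure_insert_eq_of_mem_closure hcon] at this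
      exact hfclB₂ this
    have hind : M.Indep (insert e (B₂ \ {f})) := by
      rw [(h₂.indep.diff {f}).insert_indep_iff_of_notMem (fun h => he.2 h.1)]
      exact ⟨heE, heclB₂⟩
    exact h₂.exchange_isBase_of_indep he.2 hind

/-- If nonempty, the collection of uniformly optimal bases forms the bases of a matroid
on the same ground set. -/
theorem uob_forms_matroid (M : Matroid α) (A : α → Set ℝ)
    (hE : M.E.Finite) (hA : IsAreaFun M A)
    (hne : ∃ T, IsUOB M A T) :
    ∃ M' : Matroid α, M'.E = M.E ∧ ∀ T, M'.IsBase T ↔ IsUOB M A T := by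
  classical
  obtain ⟨w₀, hw₀⟩ : ∃ w, Realization M A w := by
    refine ⟨fun e => if h : e ∈ M.E then ((hA e h).1).choose else 0, fun e he => ?_⟩
    simp only [dif_pos he]; exact ((hA e he).1).choose_spec
  have hbase : ∀ T, IsUOB M A T → M.IsBase T := fun T hT => (hT w₀ hw₀).1
  have hexch : Matroid.ExchangeProperty (IsUOB M A) := by
    intro T₁ T₂ h₁ h₂ e he
    obtain ⟨f, hf, hb₁, hb₂⟩ := sym_exchange M hE (hbase _ h₁) (hbase _ h₂) he
    refine ⟨f, hf, fun w hw => ⟨hb₁, fun B hB => ?_⟩⟩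
    have hT₁fin : T₁.Finite := hE.subset (hbase _ h₁).subset_ground
    have hT₂fin : T₂.Finite := hE.subset (hbase _ h₂).subset_ground
    have e1 : setWeight w (insert f (T₁ \ {e})) = setWeight w T₁ - w e + w f :=
      setWeight_exchange w hT₁fin he.1 hf.2
    have e2 : setWeight w (insert e (T₂ \ {f})) = setWeight w T₂ - w f + w e :=
      setWeight_exchange w hT₂fin hf.1 he.2
    have le1 : setWeight w T₁ ≤ setWeight w T₁ - w e + w f := by
      rw [← e1]; exact (h₁ w hw).2 _ hb₁
    have le2 : setWeight w T₂ ≤ setWeight w T₂ - w f + w e := by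
      rw [← e2]; exact (h₂ w hw).2 _ hb₂
    have hef : w e = w f := by linarith
    have hB₁ := (h₁ w hw).2 B hB
    rw [e1, hef]; linarith
  exact ⟨Matroid.ofIsBaseOfFinite hE (IsUOB M A) hne hexch
    (fun B hB => (hbase B hB).subset_ground), rfl, fun T => by simp⟩
end

section
/- Let (M, 𝒜) be an uncertainty matroid on a finite ground set E. For e ∈ E let F(e) = {f ∈ E − e : L_f < U_e} and F*(e) = {f ∈ E − e : L_e < U_f}. Then: (i) e is blue if and only if e ∉ span(F(e)); and (ii) e is red if and only if e ∉ cospan(F*(e)). -/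
open Matroid Set

variable {α : Type*}

lemma setWeight_union (w : α → ℝ) {s t : Set α} (hst : Disjoint s t)
    (hs : s.Finite) (ht : t.Finite) :
    setWeight w (s ∪ t) = setWeight w s + setWeight w t :=
  finsum_mem_union hst hs ht

lemma setWeight_insert (w : α → ℝ) {s : Set α} (hs : s.Finite) {x : α} (hx : x ∉ s) :
    setWeight w (insert x s) = setWeight w s + w x := by
  rw [show insert x s = s ∪ {x} by rw [Set.union_comm]; rfl,
    setWeight_union w (by simpa using hx) hs (finite_singleton x)]
  simp [setWeight]

lemma setWeight_diff_singleton (w : α → ℝ) {s : Set α} (hs : s.Finite) {x : α} (hx : x ∈ s) :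
    setWeight w s = setWeight w (s \ {x}) + w x := by
  nth_rewrite 1 [show s = insert x (s \ {x}) by
    rw [Set.insert_diff_singleton, Set.insert_eq_of_mem hx]]
  exact setWeight_insert w (hs.diff) (by simp)

lemma setWeight_compl (w : α → ℝ) {s t : Set α} (ht : t.Finite) (hst : s ⊆ t) :
    setWeight w (t \ s) + setWeight w s = setWeight w t := by
  rw [← setWeight_union w disjoint_sdiff_left (ht.diff) (ht.subset hst),
    Set.diff_union_of_subset hst]

lemma setWeight_neg (w : α → ℝ) {s : Set α} (hs : s.Finite) :
    setWeight (fun x => -(w x)) s = -setWeight w s := by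
  classical
  rw [setWeight, setWeight, ← hs.coe_toFinset, finsum_mem_coe_finset, finsum_mem_coe_finset]
  simp

lemma exists_isMinBasis (M : Matroid α) (hE : M.E.Finite) (w : α → ℝ) :
    ∃ B, IsMinBasis M w B := by
  have hfin : {B | M.IsBase B}.Finite :=
    hE.finite_subsets.subset fun B hB => hB.subset_ground
  obtain ⟨B₀⟩ := M.exists_isBase
  obtain ⟨B, hB, hmin⟩ := Set.exists_min_image {B | M.IsBase B} (setWeight w) hfin ⟨B₀, by assumption⟩
  exact ⟨B, hB, fun C hC => hmin C hC⟩

lemma mem_minBasis_iff (M : Matroid α) (hE : M.E.Finite) (w : α → ℝ) {e : α} (he : e ∈ M.E) :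
    (∃ B, IsMinBasis M w B ∧ e ∈ B) ↔
      e ∉ M.closure {f ∈ M.E | f ≠ e ∧ w f < w e} := by
  set S := {f ∈ M.E | f ≠ e ∧ w f < w e} with hSdef
  have hSE : S ⊆ M.E := fun f hf => hf.1
  constructor
  · rintro ⟨B, ⟨hB, hmin⟩, heB⟩ hecl
    have hBfin : B.Finite := hE.subset hB.subset_ground
    have hind : M.Indep (B \ {e}) := hB.indep.subset diff_subset
    have hecl' : e ∉ M.closure (B \ {e}) := hB.indep.notMem_closure_diff_of_mem heB
    have hSn : ¬ S ⊆ M.closure (B \ {e}) := fun hsub =>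
      hecl' (M.closure_subset_closure_of_subset_closure hsub hecl)
    obtain ⟨x, hxS, hxcl⟩ := not_subset.1 hSn
    have hxB : x ∉ B \ {e} := fun h => hxcl (M.subset_closure _ hind.subset_ground h)
    have hxB' : x ∉ B := fun h => hxB ⟨h, hxS.2.1⟩
    have hxind : M.Indep (insert x (B \ {e})) := by
      rw [hind.insert_indep_iff_of_notMem hxB]; exact ⟨hxS.1, hxcl⟩
    have hbase : M.IsBase (insert x (B \ {e})) := hB.exchange_isBase_of_indep hxB' hxind
    have hle := hmin _ hbase
    rw [setWeight_insert w (hBfin.diff) hxB,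
      setWeight_diff_singleton w hBfin heB] at hle
    have := hxS.2.2
    linarith
  · intro hecl
    obtain ⟨B, hBmin⟩ := exists_isMinBasis M hE w
    by_cases heB : e ∈ B
    · exact ⟨B, hBmin, heB⟩
    obtain ⟨hB, hmin⟩ := hBmin
    have hBfin : B.Finite := hE.subset hB.subset_ground
    set T := {f ∈ B | w f < w e} with hTdef
    have hTB : T ⊆ B := sep_subset _ _
    have hTS : T ⊆ S := fun f hf =>
      ⟨hB.subset_ground hf.1, fun h => heB (h ▸ hf.1), hf.2⟩
    have hTind : M.Indep T := hB.indep.subset hTB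
    have heT : e ∉ T := fun h => heB (hTB h)
    have hins : M.Indep (insert e T) := by
      rw [hTind.insert_indep_iff_of_notMem heT]
      exact ⟨he, fun h => hecl (M.closure_subset_closure hTS h)⟩
    obtain ⟨B', hB', hsub, hsub'⟩ := hins.exists_isBase_subset_union_isBase hB
    have heB' : e ∈ B' := hsub (mem_insert _ _)
    have hB'iB : B' ⊆ insert e B := hsub'.trans (by
      rintro y (hy | hy)
      · rcases hy with rfl | hy
        · exact mem_insert _ _
        · exact mem_insert_of_mem _ (hTB hy)
      · exact mem_insert_of_mem _ hy)
    have h1 : B' \ B = {e} := by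
      apply subset_antisymm
      · rintro y ⟨hy1, hy2⟩
        rcases hB'iB hy1 with rfl | hy
        · rfl
        · exact absurd hy hy2
      · rintro y rfl; exact ⟨heB', heB⟩
    have h2 : (B \ B').encard = 1 := by
      rw [hB.encard_diff_comm hB', h1, encard_singleton]
    obtain ⟨f, hf⟩ := encard_eq_one.1 h2
    have hfB : f ∈ B ∧ f ∉ B' := by
      have : f ∈ B \ B' := hf ▸ rfl
      exact ⟨this.1, this.2⟩
    have hfT : f ∉ T := fun h => hfB.2 (hsub (mem_insert_of_mem _ h))
    have hwf : ¬ w f < w e := fun h => hfT ⟨hfB.1, h⟩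
    have hB'eq : B' = insert e (B \ {f}) := by
      apply subset_antisymm
      · intro y hy
        rcases hB'iB hy with rfl | hyB
        · exact mem_insert _ _
        · refine mem_insert_of_mem _ ⟨hyB, ?_⟩
          rintro rfl
          exact hfB.2 hy
      · rintro y (rfl | ⟨hyB, hyf⟩)
        · exact heB'
        · by_contra hyB'
          have : y ∈ B \ B' := ⟨hyB, hyB'⟩
          rw [hf] at this
          exact hyf this
    have hwB' : setWeight w B' = setWeight w B - w f + w e := by
      rw [hB'eq, setWeight_insert w (hBfin.diff) (fun h => heB h.1),
        setWeight_diff_singleton w hBfin hfB.1]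
      ring
    refine ⟨B', ⟨hB', fun C hC => ?_⟩, heB'⟩
    have := hmin C hC
    linarith

lemma compl_isMinBasis (M : Matroid α) (hE : M.E.Finite) (w : α → ℝ) {B : Set α}
    (hB : IsMinBasis M w B) : IsMinBasis M✶ (fun x => -(w x)) (M.E \ B) := by
  obtain ⟨hBb, hmin⟩ := hB
  refine ⟨hBb.compl_isBase_dual, fun C hC => ?_⟩
  have hCE : C ⊆ M.E := hC.subset_ground
  have hCb : M.IsBase (M.E \ C) := (dual_isBase_iff hCE).1 hC
  have h1 := hmin _ hCb
  have e1 := setWeight_compl w hE hBb.subset_ground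
  have e2 := setWeight_compl w hE hCE
  rw [setWeight_neg w (hE.diff), setWeight_neg w (hE.subset hCE)]
  linarith

lemma compl_isMinBasis' (M : Matroid α) (hE : M.E.Finite) (w : α → ℝ) {B : Set α}
    (hB : IsMinBasis M✶ (fun x => -(w x)) B) : IsMinBasis M w (M.E \ B) := by
  have := compl_isMinBasis M✶ (by simpa using hE) (fun x => -(w x)) hB
  simp only [dual_dual, dual_ground] at this
  have hww : (fun x => -(-(w x))) = w := by funext x; ring
  rwa [hww] at this

lemma not_mem_minBasis_iff (M : Matroid α) (hE : M.E.Finite) (w : α → ℝ) {e : α}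
    (he : e ∈ M.E) :
    (∃ B, IsMinBasis M w B ∧ e ∉ B) ↔
      e ∉ M✶.closure {f ∈ M.E | f ≠ e ∧ w e < w f} := by
  have hkey := mem_minBasis_iff M✶ (by simpa using hE) (fun x => -(w x)) (e := e) (by simpa using he)
  have hset : {f ∈ M✶.E | f ≠ e ∧ -(w f) < -(w e)} = {f ∈ M.E | f ≠ e ∧ w e < w f} := by
    ext f; simp [and_assoc, neg_lt_neg_iff]
  rw [hset] at hkey
  rw [← hkey]
  constructor
  · rintro ⟨B, hB, heB⟩
    exact ⟨M.E \ B, compl_isMinBasis M hE w hB, ⟨he, heB⟩⟩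
  · rintro ⟨B', hB', heB'⟩
    refine ⟨M.E \ B', compl_isMinBasis' M hE w hB', fun h => h.2 heB'⟩

/-- Span/cospan characterization of blue and red elements. -/
theorem blue_red_span_characterization (M : Matroid α) (A : α → Set ℝ)
    (hE : M.E.Finite) (hA : IsAreaFun M A) (e : α) (he : e ∈ M.E) :
    (Blue M A e ↔ e ∉ M.closure {f ∈ M.E | f ≠ e ∧ sInf (A f) < sSup (A e)}) ∧
    (Red M A e ↔ e ∉ M✶.closure {f ∈ M.E | f ≠ e ∧ sInf (A e) < sSup (A f)}) := by
  classical
  obtain ⟨w₀, hw₀⟩ : ∃ w₀ : α → ℝ, Realization M A w₀ := by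
    refine ⟨fun f => if hf : f ∈ M.E then (hA f hf).1.choose else 0, fun f hf => ?_⟩
    simp only [dif_pos hf]; exact (hA f hf).1.choose_spec
  refine ⟨⟨?_, ?_⟩, ⟨?_, ?_⟩⟩
  · -- Blue → e ∉ closure F
    intro hblue hecl
    set F := {f ∈ M.E | f ≠ e ∧ sInf (A f) < sSup (A e)} with hF
    by_cases hFne : F.Nonempty
    · have hFfin : F.Finite := hE.subset fun f hf => hf.1
      have htne : hFfin.toFinset.Nonempty := by rwa [Set.Finite.toFinset_nonempty]
      set m := hFfin.toFinset.sup' htne (fun f => sInf (A f)) with hm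
      have hmlt : m < sSup (A e) := by
        rw [hm, Finset.sup'_lt_iff]
        intro f hf
        exact (hFfin.mem_toFinset.1 hf).2.2
      obtain ⟨we, hwe_mem, hwe⟩ := exists_lt_of_lt_csSup (hA e he).1 hmlt
      have hch : ∀ f ∈ F, ∃ a ∈ A f, a < we := fun f hf =>
        exists_lt_of_csInf_lt (hA f hf.1).1
          (lt_of_le_of_lt (Finset.le_sup' (fun f => sInf (A f)) (hFfin.mem_toFinset.2 hf)) hwe)
      set w : α → ℝ := fun g =>
        if g = e then we else if hg : g ∈ F then (hch g hg).choose else w₀ g with hwdef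
      have hwreal : Realization M A w := by
        intro g hg
        by_cases hge : g = e
        · subst hge; simpa [hwdef] using hwe_mem
        · rw [hwdef]; simp only [if_neg hge]
          by_cases hgF : g ∈ F
          · rw [dif_pos hgF]; exact (hch g hgF).choose_spec.1
          · rw [dif_neg hgF]; exact hw₀ g hg
      have hFsub : F ⊆ {f ∈ M.E | f ≠ e ∧ w f < w e} := by
        intro f hf
        refine ⟨hf.1, hf.2.1, ?_⟩
        have h1 : w f = (hch f hf).choose := by
          rw [hwdef]; simp only [if_neg hf.2.1, dif_pos hf]
        have h2 : w e = we := by simp [hwdef]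
        rw [h1, h2]
        exact (hch f hf).choose_spec.2
      exact (mem_minBasis_iff M hE w he).1 (hblue w hwreal)
        (M.closure_subset_closure hFsub hecl)
    · rw [not_nonempty_iff_eq_empty.1 hFne] at hecl
      exact (mem_minBasis_iff M hE w₀ he).1 (hblue w₀ hw₀)
        (M.closure_subset_closure (empty_subset _) hecl)
  · -- e ∉ closure F → Blue
    intro hecl w hwreal
    refine (mem_minBasis_iff M hE w he).2 fun hmem => hecl ?_
    refine M.closure_subset_closure ?_ hmem
    rintro f ⟨hf1, hf2, hf3⟩
    refine ⟨hf1, hf2, ?_⟩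
    calc sInf (A f) ≤ w f := csInf_le (hA f hf1).2.1 (hwreal f hf1)
    _ < w e := hf3
    _ ≤ sSup (A e) := le_csSup (hA e he).2.2 (hwreal e he)
  · -- Red → e ∉ cospan F*
    intro hred hecl
    set F := {f ∈ M.E | f ≠ e ∧ sInf (A e) < sSup (A f)} with hF
    by_cases hFne : F.Nonempty
    · have hFfin : F.Finite := hE.subset fun f hf => hf.1
      have htne : hFfin.toFinset.Nonempty := by rwa [Set.Finite.toFinset_nonempty]
      set m := hFfin.toFinset.inf' htne (fun f => sSup (A f)) with hm
      have hmlt : sInf (A e) < m := by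
        rw [hm, Finset.lt_inf'_iff]
        intro f hf
        exact (hFfin.mem_toFinset.1 hf).2.2
      obtain ⟨we, hwe_mem, hwe⟩ := exists_lt_of_csInf_lt (hA e he).1 hmlt
      have hch : ∀ f ∈ F, ∃ a ∈ A f, we < a := fun f hf =>
        exists_lt_of_lt_csSup (hA f hf.1).1
          (lt_of_lt_of_le hwe (Finset.inf'_le (fun f => sSup (A f)) (hFfin.mem_toFinset.2 hf)))
      set w : α → ℝ := fun g =>
        if g = e then we else if hg : g ∈ F then (hch g hg).choose else w₀ g with hwdef
      have hwreal : Realization M A w := by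
        intro g hg
        by_cases hge : g = e
        · subst hge; simpa [hwdef] using hwe_mem
        · rw [hwdef]; simp only [if_neg hge]
          by_cases hgF : g ∈ F
          · rw [dif_pos hgF]; exact (hch g hgF).choose_spec.1
          · rw [dif_neg hgF]; exact hw₀ g hg
      have hFsub : F ⊆ {f ∈ M.E | f ≠ e ∧ w e < w f} := by
        intro f hf
        refine ⟨hf.1, hf.2.1, ?_⟩
        have h1 : w f = (hch f hf).choose := by
          rw [hwdef]; simp only [if_neg hf.2.1, dif_pos hf]
        have h2 : w e = we := by simp [hwdef]
        rw [h1, h2]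
        exact (hch f hf).choose_spec.2
      exact (not_mem_minBasis_iff M hE w he).1 (hred w hwreal)
        (M✶.closure_subset_closure hFsub hecl)
    · rw [not_nonempty_iff_eq_empty.1 hFne] at hecl
      exact (not_mem_minBasis_iff M hE w₀ he).1 (hred w₀ hw₀)
        (M✶.closure_subset_closure (empty_subset _) hecl)
  · -- e ∉ cospan F* → Red
    intro hecl w hwreal
    refine (not_mem_minBasis_iff M hE w he).2 fun hmem => hecl ?_
    refine M✶.closure_subset_closure ?_ hmem
    rintro f ⟨hf1, hf2, hf3⟩
    refine ⟨hf1, hf2, ?_⟩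
    calc sInf (A e) ≤ w e := csInf_le (hA e he).2.1 (hwreal e he)
    _ < w f := hf3
    _ ≤ sSup (A f) := le_csSup (hA f hf1).2.2 (hwreal f hf1)
end

section
/- Let (M, 𝒜) be an uncertainty matroid on a finite ground set E. If an element e ∈ E is both red and blue, then e is certain. -/
open Matroid

variable {α : Type*}

lemma setWeight_split {e : α} (w : α → ℝ) {T : Set α} (hT : T.Finite) (heT : e ∈ T) :
    setWeight w T = w e + setWeight w (T \ {e}) := by
  have h : ({e} : Set α) ∪ (T \ {e}) = T := by
    ext x; by_cases hx : x = e <;> simp [hx, heT]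
  conv_lhs => rw [setWeight, ← h,
    finsum_mem_union (by simp) (Set.finite_singleton e) (hT.diff), finsum_mem_singleton]
  rfl

lemma setWeight_congr {w w' : α → ℝ} {T : Set α} (h : ∀ x ∈ T, w x = w' x) :
    setWeight w T = setWeight w' T :=
  finsum_mem_congr rfl h

/-- An element that is both red and blue is certain. -/
theorem certain_of_red_blue (M : Matroid α) (A : α → Set ℝ)
    (hE : M.E.Finite) (hA : IsAreaFun M A)
    (e : α) (he : e ∈ M.E) (hred : Red M A e) (hblue : Blue M A e) :
    Certain A e := by
  obtain ⟨r, hr⟩ := (hA e he).1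
  refine ⟨r, Set.eq_singleton_iff_unique_mem.2 ⟨hr, fun b hb => ?_⟩⟩
  by_contra hne
  -- key: for a < b both in A e, derive contradiction
  have key : ∀ a b : ℝ, a ∈ A e → b ∈ A e → a < b → False := by
    intro a b ha hb hab
    classical
    set w0 : α → ℝ := fun x => if h : x ∈ M.E then (hA x h).1.choose else 0 with hw0
    have hw0mem : ∀ x ∈ M.E, w0 x ∈ A x := fun x hx => by
      simp only [hw0, dif_pos hx]; exact (hA x hx).1.choose_spec
    set wa : α → ℝ := Function.update w0 e a with hwa
    set wb : α → ℝ := Function.update w0 e b with hwb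
    have hra : Realization M A wa := by
      intro x hx
      rcases eq_or_ne x e with rfl | hxe
      · simpa [hwa] using ha
      · simpa [hwa, Function.update_of_ne hxe] using hw0mem x hx
    have hrb : Realization M A wb := by
      intro x hx
      rcases eq_or_ne x e with rfl | hxe
      · simpa [hwb] using hb
      · simpa [hwb, Function.update_of_ne hxe] using hw0mem x hx
    obtain ⟨S, hS, heS⟩ := hred wa hra
    obtain ⟨T, hT, heT⟩ := hblue wa hra
    obtain ⟨T', hT', heT'⟩ := hblue wb hrb
    have hSfin : S.Finite := hE.subset hS.1.subset_ground
    have hTfin : T.Finite := hE.subset hT.1.subset_ground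
    have hT'fin : T'.Finite := hE.subset hT'.1.subset_ground
    -- weights of sets not containing e agree under wa and wb
    have hSab : setWeight wa S = setWeight wb S :=
      setWeight_congr (fun x hx => by
        have : x ≠ e := fun h => heS (h ▸ hx)
        simp [hwa, hwb, Function.update_of_ne this])
    -- on a set containing e, switching a to b adds (b - a)
    have hshift : ∀ U : Set α, U.Finite → e ∈ U →
        setWeight wb U = setWeight wa U + (b - a) := by
      intro U hU heU
      rw [setWeight_split wa hU heU, setWeight_split wb hU heU]
      have : setWeight wa (U \ {e}) = setWeight wb (U \ {e}) :=
        setWeight_congr (fun x hx => by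
          simp [hwa, hwb, Function.update_of_ne hx.2])
      rw [← this]
      simp [hwa, hwb]; ring
    have h1 : setWeight wa T = setWeight wa S := le_antisymm (hT.2 S hS.1) (hS.2 T hT.1)
    have h2 : setWeight wb T' ≤ setWeight wb S := hT'.2 S hS.1
    have h3 : setWeight wa T ≤ setWeight wa T' := hT.2 T' hT'.1
    have h4 := hshift T' hT'fin heT'
    linarith
  rcases lt_trichotomy r b with h | h | h
  · exact key r b hr hb h
  · exact hne h.symm
  · exact key b r hb hr h
end
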